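/- Let N ≥ 2, 1* := N/(N-1), a > 1*, b ≤ 1. Then the threshold α_c := (1/E) sup_{t>0} h(t), with h(t) := (1+t)^{1*/a - 1/b} / ((1+t)^{1*/a} - t^{1*/a}) and E the Mazya constant, satisfies: lim_{b→0⁺} α_c = 1/E, lim_{b→1⁻} α_c = a/(1* E), lim_{a→1*⁺} α_c = 1/E (for fixed b ≤ 1), and lim_{a→∞} α_c = ∞ (for fixed b ≤ 1). -/

import Mathlib

open MeasureTheory Real Filter Topology Set

noncomputable section

abbrev Euc (N : ℕ) := EuclideanSpace ℝ (Fin N)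

/-- Surface area `ω_{N-1}` of the unit sphere in `ℝ^N`, as `N` times the
volume of the unit ball. -/
def omegaS (N : ℕ) : ℝ := N * (volume (Metric.ball (0 : Euc N) 1)).toReal

/-- Mazya's best constant `E = (1/(N^{N-1} ω_{N-1}))^{1/(N-1)}`. -/
def mazyaE (N : ℕ) : ℝ := (1 / ((N : ℝ) ^ (N - 1) * omegaS N)) ^ (1/((N:ℝ)-1))

/-- The auxiliary function `h` of the critical case. -/
def hFun (os a b t : ℝ) : ℝ :=
  (1+t) ^ (os/a - 1/b) / ((1+t) ^ (os/a) - t ^ (os/a))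

/-- The concentration threshold `α_c = (1/E) sup_{t>0} h(t)`. -/
def alphaC (N : ℕ) (a b : ℝ) : ℝ :=
  (1 / mazyaE N) *
    sSup { r | ∃ t : ℝ, 0 < t ∧ r = hFun ((N:ℝ)/((N:ℝ)-1)) a b t }

/-! ### Auxiliary lemmas -/

lemma bern (s c : ℝ) (hs : 0 ≤ s) (hc0 : 0 ≤ c) (hc1 : c ≤ 1) : s ^ c ≤ 1 + c * (s - 1) := by
  have := rpow_one_add_le_one_add_mul_self (s := s - 1) (by linarith) hc0 hc1
  simpa using this

lemma D_lb (c t : ℝ) (hc0 : 0 < c) (hc1 : c ≤ 1) (ht : 0 < t) :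
    c * (1+t) ^ (c-1) ≤ (1+t)^c - t^c := by
  have h1t : (0:ℝ) < 1 + t := by linarith
  set s : ℝ := t / (1+t) with hsdef
  have hs0 : 0 < s := by positivity
  have hs1 : s < 1 := (div_lt_one h1t).2 (by linarith)
  have hfac : t ^ c = (1+t)^c * s^c := by
    rw [← Real.mul_rpow (by positivity) (by positivity), mul_div_cancel₀]
    exact h1t.ne'
  have hb := bern s c hs0.le hc0.le hc1
  have hP : (0:ℝ) < (1+t)^c := rpow_pos_of_pos h1t c
  have h1s : 1 - s = 1/(1+t) := by rw [hsdef]; field_simp; ring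
  have key : (1+t)^c * s^c ≤ (1+t)^c * (1 + c*(s-1)) :=
    mul_le_mul_of_nonneg_left hb hP.le
  rw [Real.rpow_sub_one h1t.ne', hfac]
  calc c * ((1+t)^c / (1+t)) = (1+t)^c * (c * (1-s)) := by rw [h1s]; ring
    _ ≤ (1+t)^c - (1+t)^c * s^c := by nlinarith [key]

lemma D_ub (c t : ℝ) (hc0 : 0 < c) (hc1 : c ≤ 1) (ht : 0 < t) :
    (1+t)^c - t^c ≤ c * (1+t)^c / t := by
  have h1t : (0:ℝ) < 1 + t := by linarith
  set s : ℝ := t / (1+t) with hsdef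
  have hs0 : 0 < s := by positivity
  have hs1 : s < 1 := (div_lt_one h1t).2 (by linarith)
  have hfac : t ^ c = (1+t)^c * s^c := by
    rw [← Real.mul_rpow (by positivity) (by positivity), mul_div_cancel₀]
    exact h1t.ne'
  have hP : (0:ℝ) < (1+t)^c := rpow_pos_of_pos h1t c
  have hu0 : 0 < s ^ c := rpow_pos_of_pos hs0 c
  have hu1 : s ^ c ≤ 1 := rpow_le_one hs0.le hs1.le hc0.le
  have hv : s ^ (1-c) ≤ 1 + (1-c) * (s-1) := bern s (1-c) hs0.le (by linarith) (by linarith)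
  have huv : s ^ c * s ^ (1-c) = s := by
    rw [← Real.rpow_add hs0]; norm_num
  have f1 : s ≤ s^c * (1 + (1-c)*(s-1)) := by
    calc s = s^c * s^(1-c) := huv.symm
    _ ≤ _ := mul_le_mul_of_nonneg_left hv hu0.le
  have hkey : s * (1 - s^c) ≤ c * (1 - s) := by
    nlinarith [f1, mul_nonneg (mul_nonneg (sub_nonneg.2 hu1) hc0.le) (sub_nonneg.2 hs1.le)]
  have hst : s * (1 + t) = t := by rw [hsdef]; field_simp
  have h1s : (1 - s) * (1+t) = 1 := by rw [hsdef]; field_simp; ring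
  rw [hfac, le_div_iff₀ ht]
  have hint1 : (1+t) * (1+t)^c * (s * (1 - s^c)) ≤ (1+t) * (1+t)^c * (c * (1-s)) :=
    mul_le_mul_of_nonneg_left hkey (by positivity)
  have e1 : (1+t)^c * (s*(1+t)) = (1+t)^c * t := by rw [hst]
  have e2 : ((1+t)^c * s^c) * (s*(1+t)) = ((1+t)^c * s^c) * t := by rw [hst]
  have e3 : (c*(1+t)^c) * ((1-s)*(1+t)) = c*(1+t)^c := by rw [h1s]; ring
  nlinarith [hint1, e1, e2, e3]

lemma D_pos (c t : ℝ) (hc : 0 < c) (ht : 0 < t) : 0 < (1+t)^c - t^c :=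
  sub_pos.2 (Real.rpow_lt_rpow ht.le (lt_one_add t) hc)

section hFunBounds
set_option linter.unusedSectionVars false
variable {os a b t T : ℝ} (hos : 0 < os) (ha : os < a) (hb : 0 < b) (ht : 0 < t)
include hos ha hb ht

lemma hFun_le : hFun os a b t ≤ (1+t)^(1-1/b) / (os/a) := by
  have ha0 : 0 < a := hos.trans ha
  set c := os/a with hc
  have hc0 : 0 < c := div_pos hos ha0
  have hc1 : c < 1 := (div_lt_one ha0).2 ha
  have h1t : (0:ℝ) < 1 + t := by linarith
  have hL : 0 < c * (1+t)^(c-1) := by positivity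
  have hDlb := D_lb c t hc0 hc1.le ht
  have hA : (0:ℝ) ≤ (1+t)^(c-1/b) := by positivity
  have h1 : hFun os a b t ≤ (1+t)^(c-1/b) / (c * (1+t)^(c-1)) := by
    rw [hFun, ← hc]
    gcongr
  refine h1.trans_eq ?_
  rw [div_mul_eq_div_div_swap, ← Real.rpow_sub h1t]
  ring_nf

lemma hFun_ge : t * (1+t)^(-(1/b)) / (os/a) ≤ hFun os a b t := by
  have ha0 : 0 < a := hos.trans ha
  set c := os/a with hc
  have hc0 : 0 < c := div_pos hos ha0
  have hc1 : c < 1 := (div_lt_one ha0).2 ha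
  have h1t : (0:ℝ) < 1 + t := by linarith
  have hP : (0:ℝ) < (1+t)^c := rpow_pos_of_pos h1t c
  have hU : 0 < c * (1+t)^c / t := by positivity
  have hDub := D_ub c t hc0 hc1.le ht
  have hDpos := D_pos c t hc0 ht
  have hA : (0:ℝ) ≤ (1+t)^(c-1/b) := by positivity
  have h1 : (1+t)^(c-1/b) / (c * (1+t)^c / t) ≤ hFun os a b t := by
    rw [hFun, ← hc]
    gcongr
  refine le_trans (le_of_eq ?_) h1
  have hA2 : (1+t)^(c-1/b) = (1+t)^c * (1+t)^(-(1/b)) := by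
    rw [← Real.rpow_add h1t]; ring_nf
  rw [hA2]
  field_simp

lemma hFun_ge_simple : (1+t)^(-(1/b)) ≤ hFun os a b t := by
  have ha0 : 0 < a := hos.trans ha
  set c := os/a with hc
  have hc0 : 0 < c := div_pos hos ha0
  have h1t : (0:ℝ) < 1 + t := by linarith
  have hP : (0:ℝ) < (1+t)^c := rpow_pos_of_pos h1t c
  have hDpos := D_pos c t hc0 ht
  have hA : (0:ℝ) ≤ (1+t)^(c-1/b) := by positivity
  have hDle : (1+t)^c - t^c ≤ (1+t)^c := by
    have : (0:ℝ) ≤ t ^ c := by positivity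
    linarith
  have h1 : (1+t)^(c-1/b) / (1+t)^c ≤ hFun os a b t := by
    rw [hFun, ← hc]
    gcongr
  refine le_trans (le_of_eq ?_) h1
  rw [← Real.rpow_sub h1t]
  ring_nf

lemma hFun_le_small (hT : t ≤ T) (hT1 : T < 1) :
    hFun os a b t ≤ (1+T)^(os/a) / (1 - T^(os/a)) := by
  have ha0 : 0 < a := hos.trans ha
  set c := os/a with hc
  have hc0 : 0 < c := div_pos hos ha0
  have h1t : (0:ℝ) < 1 + t := by linarith
  have hT0 : 0 < T := ht.trans_le hT
  have hTc : T ^ c < 1 := Real.rpow_lt_one hT0.le hT1 hc0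
  have hnum : (1+t)^(c-1/b) ≤ (1+T)^c := by
    calc (1+t)^(c-1/b) ≤ (1+t)^c :=
          Real.rpow_le_rpow_of_exponent_le (by linarith) (by
            have : 0 < 1/b := by positivity
            linarith)
      _ ≤ (1+T)^c := Real.rpow_le_rpow (by linarith) (by linarith) hc0.le
  have hden : 1 - T^c ≤ (1+t)^c - t^c := by
    have h1 : (1:ℝ) ≤ (1+t)^c := Real.one_le_rpow (by linarith) hc0.le
    have h2 : t^c ≤ T^c := Real.rpow_le_rpow ht.le hT hc0.le
    linarith
  rw [hFun, ← hc]
  exact div_le_div₀ (by positivity) hnum (by linarith) hden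

end hFunBounds

/-! ### the sup set -/

def SS (N : ℕ) (a b : ℝ) : Set ℝ :=
  { r | ∃ t : ℝ, 0 < t ∧ r = hFun ((N:ℝ)/((N:ℝ)-1)) a b t }

lemma alphaC_eq (N : ℕ) (a b : ℝ) :
    alphaC N a b = (1 / mazyaE N) * sSup (SS N a b) := rfl

lemma mazyaE_pos (N : ℕ) (hN : 2 ≤ N) : 0 < mazyaE N := by
  have hvol : 0 < (volume (Metric.ball (0:Euc N) 1)).toReal :=
    ENNReal.toReal_pos (Metric.measure_ball_pos volume _ one_pos).ne' measure_ball_lt_top.ne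
  have hN0 : 0 < (N:ℝ) := by
    have : 0 < N := by omega
    exact_mod_cast this
  have hω : 0 < omegaS N := mul_pos hN0 hvol
  exact Real.rpow_pos_of_pos (by positivity) _

section supLemmas
variable {N : ℕ} {a b : ℝ}

lemma os_gt_one (hN : 2 ≤ N) : 1 < (N:ℝ)/((N:ℝ)-1) := by
  have h2 : (2:ℝ) ≤ (N:ℝ) := by exact_mod_cast hN
  rw [one_lt_div (by linarith)]
  linarith

lemma mem_le (hN : 2 ≤ N) (ha : (N:ℝ)/((N:ℝ)-1) < a) (hb0 : 0 < b) (hb1 : b ≤ 1) :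
    ∀ r ∈ SS N a b, r ≤ a / ((N:ℝ)/((N:ℝ)-1)) := by
  set os := (N:ℝ)/((N:ℝ)-1) with hosdef
  have hos : 0 < os := lt_trans one_pos (os_gt_one hN)
  rintro r ⟨t, ht, rfl⟩
  have h1 : hFun os a b t ≤ (1+t)^(1-1/b) / (os/a) := hFun_le hos ha hb0 ht
  have h2 : (1+t)^(1-1/b) ≤ 1 := by
    apply Real.rpow_le_one_of_one_le_of_nonpos (by linarith)
    have : 1 ≤ 1/b := one_le_one_div hb0 hb1
    linarith
  have h3 : (1+t)^(1-1/b) / (os/a) ≤ 1 / (os/a) := by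
    gcongr
    exact (div_pos hos (hos.trans ha)).le
  rw [one_div_div] at h3
  exact h1.trans h3

lemma bddAboveSS (hN : 2 ≤ N) (ha : (N:ℝ)/((N:ℝ)-1) < a) (hb0 : 0 < b) (hb1 : b ≤ 1) :
    BddAbove (SS N a b) :=
  ⟨_, fun r hr => mem_le hN ha hb0 hb1 r hr⟩

lemma sSup_le_SS (hN : 2 ≤ N) (ha : (N:ℝ)/((N:ℝ)-1) < a) (hb0 : 0 < b) (hb1 : b ≤ 1) :
    sSup (SS N a b) ≤ a / ((N:ℝ)/((N:ℝ)-1)) := by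
  apply Real.sSup_le (mem_le hN ha hb0 hb1)
  have hos : 0 < (N:ℝ)/((N:ℝ)-1) := lt_trans one_pos (os_gt_one hN)
  exact (div_pos (hos.trans ha) hos).le

lemma one_le_sSup_SS (hN : 2 ≤ N) (ha : (N:ℝ)/((N:ℝ)-1) < a) (hb0 : 0 < b) (hb1 : b ≤ 1) :
    1 ≤ sSup (SS N a b) := by
  set os := (N:ℝ)/((N:ℝ)-1) with hosdef
  have hos : 0 < os := lt_trans one_pos (os_gt_one hN)
  have hcont : ContinuousAt (fun t : ℝ => (1+t)^(-(1/b))) 0 := by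
    apply ContinuousAt.rpow_const
    · exact (continuous_const.add continuous_id).continuousAt
    · left; norm_num
  have htend : Tendsto (fun t : ℝ => (1+t)^(-(1/b))) (𝓝[>] (0:ℝ)) (𝓝 1) := by
    have := hcont.continuousWithinAt (s := Ioi (0:ℝ))
    simpa [Real.one_rpow] using this.tendsto
  refine le_of_tendsto htend ?_
  filter_upwards [self_mem_nhdsWithin] with t ht
  exact le_trans (hFun_ge_simple hos ha hb0 ht)
    (le_csSup (bddAboveSS hN ha hb0 hb1) ⟨t, ht, rfl⟩)

end supLemmas

/-- asymptotic behavior of `α_c` in the regime `a > 1*`, `b ≤ 1`. -/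
theorem alphaC_asymptotics (N : ℕ) (hN : 2 ≤ N) :
    (∀ a : ℝ, (N : ℝ) / ((N : ℝ) - 1) < a →
      Tendsto (fun b : ℝ => alphaC N a b) (nhdsWithin 0 (Set.Ioi 0))
        (nhds (1 / mazyaE N))) ∧
    (∀ a : ℝ, (N : ℝ) / ((N : ℝ) - 1) < a →
      Tendsto (fun b : ℝ => alphaC N a b) (nhdsWithin 1 (Set.Iio 1))
        (nhds (a / ((N : ℝ) / ((N : ℝ) - 1) * mazyaE N)))) ∧
    (∀ b : ℝ, 0 < b → b ≤ 1 →
      Tendsto (fun a : ℝ => alphaC N a b)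
        (nhdsWithin ((N : ℝ) / ((N : ℝ) - 1)) (Set.Ioi ((N : ℝ) / ((N : ℝ) - 1))))
        (nhds (1 / mazyaE N))) ∧
    (∀ b : ℝ, 0 < b → b ≤ 1 →
      Tendsto (fun a : ℝ => alphaC N a b) atTop atTop) := by
  have hE : 0 < mazyaE N := mazyaE_pos N hN
  set E' : ℝ := 1 / mazyaE N with hE'def
  have hE' : 0 < E' := by positivity
  set os : ℝ := (N:ℝ)/((N:ℝ)-1) with hosdef
  have hos1 : 1 < os := os_gt_one hN
  have hos : 0 < os := lt_trans one_pos hos1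
  refine ⟨?part1, ?part2, ?part3, ?part4⟩
  case part1 =>
    intro a ha
    have ha0 : 0 < a := hos.trans ha
    rw [Metric.tendsto_nhds]
    intro ε hε
    set M : ℝ := 1 + ε / (2 * E') with hMdef
    have hM1 : 1 < M := by
      have : 0 < ε / (2 * E') := by positivity
      rw [hMdef]; linarith
    -- choose T
    have hGcont : ContinuousAt (fun T : ℝ => (1+T)^(os/a) / (1 - T^(os/a))) 0 := by
      have hc0 : 0 < os/a := div_pos hos ha0
      apply ContinuousAt.div
      · exact ContinuousAt.rpow_const ((continuous_const.add continuous_id).continuousAt)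
          (Or.inl (by norm_num))
      · exact (continuousAt_const.sub (Real.continuousAt_rpow_const 0 _ (Or.inr hc0.le)))
      · simp [Real.zero_rpow hc0.ne']
    have hGval : (fun T : ℝ => (1+T)^(os/a) / (1 - T^(os/a))) 0 = 1 := by
      have hc0 : 0 < os/a := div_pos hos ha0
      simp [Real.zero_rpow hc0.ne', Real.one_rpow]
    have hGtend : Tendsto (fun T : ℝ => (1+T)^(os/a) / (1 - T^(os/a))) (𝓝[>] (0:ℝ)) (𝓝 1) := by
      have hc0 : 0 < os/a := div_pos hos ha0
      simpa [Real.zero_rpow hc0.ne'] using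
        (hGcont.continuousWithinAt (s := Ioi (0:ℝ))).tendsto
    have hTev : ∀ᶠ T in 𝓝[>] (0:ℝ),
        ((1+T)^(os/a) / (1 - T^(os/a)) < M ∧ T < 1) ∧ T ∈ Ioi (0:ℝ) := by
      refine Filter.Eventually.and (Filter.Eventually.and ?_ ?_) self_mem_nhdsWithin
      · exact hGtend.eventually_lt_const hM1
      · exact eventually_nhdsWithin_of_eventually_nhds (eventually_lt_nhds one_pos)
    obtain ⟨T, ⟨hGT, hT1⟩, hT0⟩ := hTev.exists
    rw [Set.mem_Ioi] at hT0
    -- eventual smallness of the large-t bound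
    have h1b : Tendsto (fun b : ℝ => 1 - 1/b) (𝓝[>] (0:ℝ)) atBot := by
      have h : Tendsto (fun b : ℝ => 1/b) (𝓝[>] (0:ℝ)) atTop := by
        simpa [one_div] using tendsto_inv_nhdsGT_zero (𝕜 := ℝ)
      have h2 : Tendsto (fun b : ℝ => -(1/b)) (𝓝[>] (0:ℝ)) atBot :=
        tendsto_neg_atBot_iff.2 h
      simpa [sub_eq_add_neg] using tendsto_atBot_add_const_left _ 1 h2
    have hUtend : Tendsto (fun b : ℝ => (1+T)^(1-1/b) / (os/a)) (𝓝[>] (0:ℝ)) (𝓝 0) := by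
      have hexp : Tendsto (fun b : ℝ => (1-1/b) * Real.log (1+T)) (𝓝[>] (0:ℝ)) atBot :=
        h1b.atBot_mul_const' (Real.log_pos (by linarith))
      have : Tendsto (fun b : ℝ => (1+T)^(1-1/b)) (𝓝[>] (0:ℝ)) (𝓝 0) := by
        have := Real.tendsto_exp_atBot.comp hexp
        refine this.congr fun b => ?_
        rw [Function.comp_apply, Real.rpow_def_of_pos (by linarith : (0:ℝ) < 1+T), mul_comm]
      simpa using this.div_const (os/a)
    have hbev : ∀ᶠ b in 𝓝[>] (0:ℝ),
        ((1+T)^(1-1/b) / (os/a) < M ∧ b < 1) ∧ b ∈ Ioi (0:ℝ) := by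
      refine Filter.Eventually.and (Filter.Eventually.and ?_ ?_) self_mem_nhdsWithin
      · exact hUtend.eventually_lt_const (by linarith)
      · exact eventually_nhdsWithin_of_eventually_nhds (eventually_lt_nhds one_pos)
    filter_upwards [hbev] with b hb
    obtain ⟨⟨hUb, hb1⟩, hb0⟩ := hb
    rw [Set.mem_Ioi] at hb0
    -- sup ≤ M
    have hsup_le : sSup (SS N a b) ≤ M := by
      apply Real.sSup_le ?_ (by linarith)
      rintro r ⟨t, ht, rfl⟩
      rcases le_or_gt t T with hcase | hcase
      · exact (hFun_le_small hos ha hb0 ht hcase hT1).trans hGT.le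
      · refine le_trans (hFun_le hos ha hb0 ht) (le_trans ?_ hUb.le)
        have hmono : (1+t)^(1-1/b) ≤ (1+T)^(1-1/b) :=
          Real.rpow_le_rpow_of_nonpos (by linarith) (by linarith)
            (by
              have : 1 ≤ 1/b := one_le_one_div hb0 hb1.le
              linarith)
        exact div_le_div₀ (by positivity) hmono (div_pos hos ha0) le_rfl
    have hsup_ge : 1 ≤ sSup (SS N a b) := one_le_sSup_SS hN ha hb0 hb1.le
    have hlow : E' ≤ alphaC N a b := by
      rw [alphaC_eq]
      calc E' = E' * 1 := (mul_one E').symm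
        _ ≤ E' * sSup (SS N a b) := by gcongr
    have hhigh : alphaC N a b ≤ E' * M := by
      rw [alphaC_eq]
      gcongr
    have hEM : E' * M = E' + ε/2 := by
      rw [hMdef]
      field_simp
      all_goals ring
    have hhigh2 : alphaC N a b ≤ E' + ε/2 := le_trans hhigh (le_of_eq hEM)
    rw [Real.dist_eq, abs_lt]
    exact ⟨by linarith, by linarith⟩
  case part2 =>
    intro a ha
    have ha0 : 0 < a := hos.trans ha
    set L : ℝ := a / (os * mazyaE N) with hLdef
    have hL : 0 < L := by positivity
    have hLeq : L = E' * (a/os) := by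
      rw [hLdef, hE'def, one_div, inv_mul_eq_div, div_div]
    rw [Metric.tendsto_nhds]
    intro ε hε
    set T : ℝ := max 1 (2*L/ε) with hTdef
    have hT1 : (1:ℝ) ≤ T := le_max_left _ _
    have hT0 : 0 < T := by linarith
    have hT2 : 2*L/ε ≤ T := le_max_right _ _
    have h1T : (0:ℝ) < 1 + T := by linarith
    -- value at b = 1 exceeds L - ε/2
    have hval : L - ε/2 < E' * (T * (1+T)^(-(1:ℝ)) / (os/a)) := by
      rw [Real.rpow_neg_one]
      have heq : E' * (T * (1+T)⁻¹ / (os/a)) = L * (T/(1+T)) := by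
        rw [hLeq]; field_simp
      rw [heq]
      have h2 : L - L * (T/(1+T)) = L / (1+T) := by field_simp; ring
      have h3 : L / (1+T) < ε/2 := by
        rw [div_lt_iff₀ h1T]
        have h4 : 2*L ≤ T * ε := (div_le_iff₀ hε).1 hT2
        nlinarith
      linarith
    -- continuity in b at 1
    have hcont : ContinuousAt (fun b : ℝ => E' * (T * (1+T)^(-(1/b)) / (os/a))) 1 := by
      apply ContinuousAt.mul continuousAt_const
      apply ContinuousAt.div_const
      apply ContinuousAt.mul continuousAt_const
      have h1 : ContinuousAt (fun b : ℝ => -(1/b)) 1 :=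
        ((continuousAt_const.div continuousAt_id one_ne_zero)).neg
      exact (Real.continuousAt_const_rpow (by linarith : (1+T) ≠ 0)).comp h1
    have hpow1 : ((1:ℝ)+T)^(-(1/(1:ℝ))) = (1+T)⁻¹ := by
      norm_num [Real.rpow_neg_one]
    have htendb : Tendsto (fun b : ℝ => E' * (T * (1+T)^(-(1/b)) / (os/a))) (𝓝[<] (1:ℝ))
        (𝓝 (E' * (T * (1+T)^(-(1/(1:ℝ))) / (os/a)))) :=
      hcont.continuousWithinAt (s := Iio (1:ℝ))
    have hval2 : L - ε/2 < E' * (T * (1+T)^(-(1/(1:ℝ))) / (os/a)) := by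
      rw [hpow1]
      rw [Real.rpow_neg_one] at hval
      exact hval
    have hbev : ∀ᶠ b in 𝓝[<] (1:ℝ),
        ((L - ε/2 < E' * (T * (1+T)^(-(1/b)) / (os/a))) ∧ 0 < b) ∧ b ∈ Iio (1:ℝ) := by
      refine Filter.Eventually.and (Filter.Eventually.and ?_ ?_) self_mem_nhdsWithin
      · exact htendb.eventually_const_lt hval2
      · exact eventually_nhdsWithin_of_eventually_nhds (eventually_gt_nhds one_pos)
    filter_upwards [hbev] with b hb
    obtain ⟨⟨hWb, hb0⟩, hb1⟩ := hb
    rw [Set.mem_Iio] at hb1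
    have hlow : L - ε/2 < alphaC N a b := by
      refine hWb.trans_le ?_
      rw [alphaC_eq]
      gcongr
      exact le_trans (hFun_ge hos ha hb0 hT0)
        (le_csSup (bddAboveSS hN ha hb0 hb1.le) ⟨T, hT0, rfl⟩)
    have hhigh : alphaC N a b ≤ L := by
      rw [alphaC_eq, hLeq]
      gcongr
      exact sSup_le_SS hN ha hb0 hb1.le
    rw [Real.dist_eq, abs_lt]
    constructor <;> linarith
  case part3 =>
    intro b hb0 hb1
    have hupper : Tendsto (fun a : ℝ => E' * (a/os)) (𝓝[>] os) (𝓝 E') := by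
      have hc : Tendsto (fun a : ℝ => E' * (a/os)) (𝓝 os) (𝓝 (E' * (os/os))) := by
        exact (continuous_const.mul (continuous_id.div_const os)).continuousAt
      rw [div_self hos.ne', mul_one] at hc
      exact hc.mono_left nhdsWithin_le_nhds
    refine tendsto_of_tendsto_of_tendsto_of_le_of_le' tendsto_const_nhds hupper ?_ ?_
    · filter_upwards [self_mem_nhdsWithin] with a ha
      rw [Set.mem_Ioi] at ha
      rw [alphaC_eq]
      calc E' = E' * 1 := (mul_one E').symm
        _ ≤ _ := by gcongr; exact one_le_sSup_SS hN ha hb0 hb1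
    · filter_upwards [self_mem_nhdsWithin] with a ha
      rw [Set.mem_Ioi] at ha
      rw [alphaC_eq]
      gcongr
      exact sSup_le_SS hN ha hb0 hb1
  case part4 =>
    intro b hb0 hb1
    have hr2 : (0:ℝ) < ((1:ℝ)+1)^(-(1/b)) := Real.rpow_pos_of_pos (by norm_num) _
    have hC : 0 < E' * ((1:ℝ)+1)^(-(1/b)) / os := div_pos (mul_pos hE' hr2) hos
    refine tendsto_atTop_mono' atTop ?_ (Tendsto.const_mul_atTop hC tendsto_id)
    filter_upwards [eventually_gt_atTop os] with a ha
    have ha0 : 0 < a := hos.trans ha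
    have h1 : 1 * (1+1)^(-(1/b)) / (os/a) ≤ hFun os a b 1 := hFun_ge hos ha hb0 one_pos
    have h2 : hFun os a b 1 ≤ sSup (SS N a b) :=
      le_csSup (bddAboveSS hN ha hb0 hb1) ⟨1, one_pos, rfl⟩
    have h3 : (E' * ((1:ℝ)+1)^(-(1/b)) / os) * a = E' * (1 * (1+1)^(-(1/b)) / (os/a)) := by
      field_simp
    calc (E' * ((1:ℝ)+1)^(-(1/b)) / os) * id a
        = E' * (1 * (1+1)^(-(1/b)) / (os/a)) := h3
      _ ≤ E' * sSup (SS N a b) := by gcongr; exact h1.trans h2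
      _ = alphaC N a b := (alphaC_eq N a b).symm
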